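/- Let μ be a finite complex Borel measure on ℝ³ whose Fourier transform μ̂ is C², even, and satisfies |∇μ̂(x)| ≤ C(1+|x|)^{−1−δ} for some C, δ > 0 and all x ∈ ℝ³. Define ϑ(x) := −x·∇μ̂(x) and ψ(x) := 2π|x|²e^{−π|x|²}. Then there is a constant C' (depending on μ and δ) such that |ϑ(x)| ≤ C' ∫_1^∞ ψ(x/α) dα/α^{1+δ} for every x ∈ ℝ³. -/

import Mathlib

open MeasureTheory Real
open scoped RealInnerProductSpace

/-- Auxiliary: `2π t e^{-π t} ≤ 1` for `t ≥ 0`. -/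
lemma gauss_aux_le_one (t : ℝ) (ht : 0 ≤ t) :
    2 * π * t * Real.exp (-π * t) ≤ 1 := by
  have hpt : 0 ≤ π * t := mul_nonneg Real.pi_pos.le ht
  have h1 : π * t ≤ Real.exp (π * t - 1) := by
    have := Real.add_one_le_exp (π * t - 1); linarith
  have h2 : Real.exp (π * t - 1) * Real.exp (-(π * t)) = Real.exp (-1) := by
    rw [← Real.exp_add]; ring_nf
  have hexp_pos : (0:ℝ) < Real.exp (-(π * t)) := Real.exp_pos _
  have h3 : π * t * Real.exp (-(π * t)) ≤ Real.exp (-1) := by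
    calc π * t * Real.exp (-(π * t))
        ≤ Real.exp (π * t - 1) * Real.exp (-(π * t)) := by
          exact mul_le_mul_of_nonneg_right h1 hexp_pos.le
      _ = Real.exp (-1) := h2
  have h4 : (2:ℝ) ≤ Real.exp 1 := by
    have := Real.add_one_le_exp (1:ℝ); linarith
  have h5 : Real.exp (-1) ≤ (2:ℝ)⁻¹ := by
    rw [Real.exp_neg]
    exact inv_anti₀ two_pos h4
  have : -π * t = -(π * t) := by ring
  rw [this]
  nlinarith [h3, h5, Real.exp_pos (-(π * t))]

set_option maxHeartbeats 1000000 in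
/-- Gaussian domination: if the Fourier transform `μ̂` of a finite complex
Borel measure `μ = w·ν` on ℝ³ is C², even, and satisfies `|∇μ̂(x)| ≤ C(1+|x|)^{-1-δ}`, then
`ϑ(x) := -x·∇μ̂(x)` satisfies `|ϑ(x)| ≤ C' ∫_1^∞ ψ(x/α) dα/α^{1+δ}` with
`ψ(x) = 2π|x|²e^{-π|x|²}`. -/
theorem gaussian_domination
    (ν : Measure (EuclideanSpace ℝ (Fin 3))) [IsFiniteMeasure ν]
    (w : EuclideanSpace ℝ (Fin 3) → ℂ) (hw : Integrable w ν)
    (μhat : EuclideanSpace ℝ (Fin 3) → ℂ)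
    (hμhat : ∀ y, μhat y = ∫ x, w x * Complex.exp (-(2 * π * Complex.I) * (⟪x, y⟫ : ℝ)) ∂ν)
    (hC2 : ContDiff ℝ 2 μhat) (heven : ∀ y, μhat (-y) = μhat y)
    (C δ : ℝ) (hC : 0 < C) (hδ : 0 < δ)
    (hdecay : ∀ x, ‖fderiv ℝ μhat x‖ ≤ C * (1 + ‖x‖) ^ (-(1 + δ)))
    (ϑ : EuclideanSpace ℝ (Fin 3) → ℂ) (hϑ : ∀ x, ϑ x = -(fderiv ℝ μhat x x))
    (ψ : EuclideanSpace ℝ (Fin 3) → ℝ)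
    (hψ : ∀ y, ψ y = 2 * π * ‖y‖ ^ 2 * Real.exp (-π * ‖y‖ ^ 2)) :
    ∃ C' : ℝ, 0 < C' ∧ ∀ x : EuclideanSpace ℝ (Fin 3),
      ‖ϑ x‖ ≤ C' * ∫ α in Set.Ioi (1 : ℝ), ψ (α⁻¹ • x) / α ^ (1 + δ) := by
  classical
  set d : EuclideanSpace ℝ (Fin 3) → (EuclideanSpace ℝ (Fin 3) →L[ℝ] ℂ) := fderiv ℝ μhat
    with hd_def
  -- μhat is differentiable
  have hdiff : Differentiable ℝ μhat := hC2.differentiable two_ne_zero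
  -- derivative vanishes at 0 by evenness
  have hd0 : d 0 = 0 := by
    have he : (fun y : EuclideanSpace ℝ (Fin 3) => μhat (-y)) = μhat := funext heven
    have H1 : HasFDerivAt (fun y : EuclideanSpace ℝ (Fin 3) => -y)
        (-(ContinuousLinearMap.id ℝ (EuclideanSpace ℝ (Fin 3))))
        (0 : EuclideanSpace ℝ (Fin 3)) :=
      (hasFDerivAt_id (0 : EuclideanSpace ℝ (Fin 3))).neg
    have h0 : HasFDerivAt μhat (d 0)
        ((fun y : EuclideanSpace ℝ (Fin 3) => -y) (0 : EuclideanSpace ℝ (Fin 3))) := by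
      simp only [neg_zero]
      exact (hdiff 0).hasFDerivAt
    have H2 := h0.comp (0 : EuclideanSpace ℝ (Fin 3)) H1
    have H3 : HasFDerivAt μhat
        ((d 0).comp (-(ContinuousLinearMap.id ℝ (EuclideanSpace ℝ (Fin 3)))))
        (0 : EuclideanSpace ℝ (Fin 3)) := by
      have : μhat ∘ (fun y : EuclideanSpace ℝ (Fin 3) => -y) = μhat := by
        funext y; exact heven y
      rwa [this] at H2
    have h1 : d 0 = (d 0).comp (-(ContinuousLinearMap.id ℝ (EuclideanSpace ℝ (Fin 3)))) := by
      rw [hd_def, ← H3.fderiv]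
    rw [ContinuousLinearMap.comp_neg, ContinuousLinearMap.comp_id] at h1
    ext v
    have hv : d 0 v = -(d 0 v) := by
      conv_lhs => rw [h1]
      simp
    have h2v : (2:ℂ) * (d 0 v) = 0 := by linear_combination hv
    have := mul_eq_zero.mp h2v
    simpa using this
  -- local Lipschitz bound near 0
  have hd1 : ContDiff ℝ 1 d := hC2.fderiv_right (by norm_num)
  obtain ⟨M, hM⟩ := (isCompact_closedBall (0 : EuclideanSpace ℝ (Fin 3)) 1).exists_bound_of_continuousOn
    (hd1.continuous_fderiv one_ne_zero).continuousOn
  have hM0 : 0 ≤ M := le_trans (norm_nonneg _) (hM 0 (Metric.mem_closedBall_self zero_le_one))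
  have hlip : ∀ y : EuclideanSpace ℝ (Fin 3), ‖y‖ ≤ 1 → ‖d y‖ ≤ M * ‖y‖ := by
    intro y hy
    have hmem : y ∈ Metric.closedBall (0 : EuclideanSpace ℝ (Fin 3)) 1 := by
      rwa [Metric.mem_closedBall, dist_zero_right]
    have := (convex_closedBall (0 : EuclideanSpace ℝ (Fin 3)) 1).norm_image_sub_le_of_norm_fderiv_le
      (fun z _ => (hd1.differentiable one_ne_zero).differentiableAt) hM
      (Metric.mem_closedBall_self zero_le_one) hmem
    simpa [hd0] using this
  -- positivity and boundedness of ψ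
  have hψ0 : ∀ y : EuclideanSpace ℝ (Fin 3), 0 ≤ ψ y := by
    intro y; rw [hψ]; positivity
  have hψ1 : ∀ y : EuclideanSpace ℝ (Fin 3), ψ y ≤ 1 := by
    intro y; rw [hψ]
    have := gauss_aux_le_one (‖y‖^2) (by positivity)
    linarith
  have hψc : Continuous ψ := by
    have : ψ = fun y => 2 * π * ‖y‖ ^ 2 * Real.exp (-π * ‖y‖ ^ 2) := funext hψ
    rw [this]; fun_prop
  -- the constants
  set c : ℝ := 2 * π * Real.exp (-π) * (2:ℝ) ^ (-(3+δ)) with hc_def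
  have hc0 : 0 < c := by
    have := Real.rpow_pos_of_pos (by norm_num : (0:ℝ) < 2) (-(3+δ))
    have := Real.exp_pos (-π)
    positivity
  set K : ℝ := max M C with hK_def
  have hK0 : 0 < K := lt_of_lt_of_le hC (le_max_right _ _)
  refine ⟨K / c, div_pos hK0 hc0, ?_⟩
  intro x
  set r : ℝ := ‖x‖ with hr_def
  have hr0 : 0 ≤ r := norm_nonneg x
  set s : ℝ := max 1 r with hs_def
  have hs1 : (1:ℝ) ≤ s := le_max_left _ _
  have hs0 : (0:ℝ) < s := lt_of_lt_of_le one_pos hs1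
  have hrs : r ≤ s := le_max_right _ _
  set F : ℝ → ℝ := fun α => ψ (α⁻¹ • x) / α ^ (1 + δ) with hF_def
  -- continuity / nonnegativity / integrability of F on Ioi 1
  have hFcont : ContinuousOn F (Set.Ioi (1:ℝ)) := by
    apply ContinuousOn.div
    · exact (hψc.comp_continuousOn
        ((continuousOn_id.inv₀ (fun α hα => ne_of_gt (lt_trans one_pos hα))).smul
          continuousOn_const))
    · exact continuousOn_id.rpow_const (fun α hα => Or.inr (by positivity))
    · exact fun α hα => (Real.rpow_pos_of_pos (lt_trans one_pos hα) _).ne'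
  have hFnonneg : ∀ α ∈ Set.Ioi (1:ℝ), 0 ≤ F α := by
    intro α hα
    exact div_nonneg (hψ0 _) (Real.rpow_pos_of_pos (lt_trans one_pos hα) _).le
  have hFint : IntegrableOn F (Set.Ioi (1:ℝ)) := by
    apply Integrable.mono' (integrableOn_Ioi_rpow_of_lt (by linarith : -(1+δ) < -1) one_pos)
      (hFcont.aestronglyMeasurable measurableSet_Ioi)
    filter_upwards [ae_restrict_mem measurableSet_Ioi] with α hα
    have hα1 : (1:ℝ) < α := hα
    have hα0 : (0:ℝ) < α := lt_trans one_pos hα1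
    rw [Real.norm_of_nonneg (hFnonneg α hα), Real.rpow_neg hα0.le, inv_eq_one_div]
    show ψ (α⁻¹ • x) / α ^ (1 + δ) ≤ 1 / α ^ (1 + δ)
    exact (div_le_div_iff_of_pos_right (Real.rpow_pos_of_pos hα0 _)).mpr (hψ1 _)
  -- key pointwise lower bound on Ioc s (2s)
  have key : ∀ α ∈ Set.Ioc s (2*s),
      2 * π * (((2*s)⁻¹ * r)^2) * Real.exp (-π) * (2*s) ^ (-(1+δ)) ≤ F α := by
    intro α hα
    have hαs : s < α := hα.1
    have hα2s : α ≤ 2*s := hα.2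
    have hα0 : (0:ℝ) < α := lt_trans hs0 hαs
    have h2s0 : (0:ℝ) < 2*s := by linarith
    have hnorm : ‖α⁻¹ • x‖ = α⁻¹ * r := by
      rw [norm_smul, Real.norm_eq_abs, abs_of_pos (inv_pos.mpr hα0)]
    have hinv1 : (2*s)⁻¹ ≤ α⁻¹ := inv_anti₀ hα0 hα2s
    have hinv2 : α⁻¹ ≤ s⁻¹ := inv_anti₀ hs0 hαs.le
    have hle1 : α⁻¹ * r ≤ 1 := by
      calc α⁻¹ * r ≤ s⁻¹ * s := mul_le_mul hinv2 hrs hr0 (inv_nonneg.mpr hs0.le)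
        _ = 1 := inv_mul_cancel₀ hs0.ne'
    have ht0 : 0 ≤ α⁻¹ * r := mul_nonneg (inv_nonneg.mpr hα0.le) hr0
    have ht2 : (α⁻¹ * r)^2 ≤ 1 := pow_le_one₀ ht0 hle1
    have hexp : Real.exp (-π) ≤ Real.exp (-π * (α⁻¹ * r)^2) := by
      apply Real.exp_le_exp.mpr
      have hππ : π * (α⁻¹ * r)^2 ≤ π := mul_le_of_le_one_right Real.pi_pos.le ht2
      linarith
    have hrpow : (2*s) ^ (-(1+δ)) ≤ α ^ (-(1+δ)) :=
      Real.rpow_le_rpow_of_nonpos hα0 hα2s (by linarith)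
    have hFα : F α = 2 * π * ((α⁻¹ * r)^2) * Real.exp (-π * (α⁻¹ * r)^2) * α ^ (-(1+δ)) := by
      show ψ (α⁻¹ • x) / α ^ (1 + δ) = _
      rw [hψ, hnorm, Real.rpow_neg hα0.le, div_eq_mul_inv]
    rw [hFα]
    have hsq : ((2*s)⁻¹ * r)^2 ≤ (α⁻¹ * r)^2 := by
      apply sq_le_sq'
      · nlinarith [mul_nonneg (inv_nonneg.mpr h2s0.le) hr0,
          mul_nonneg (inv_nonneg.mpr hα0.le) hr0]
      · exact mul_le_mul_of_nonneg_right hinv1 hr0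
    apply mul_le_mul
    · apply mul_le_mul
      · apply mul_le_mul_of_nonneg_left hsq (by positivity)
      · exact hexp
      · exact (Real.exp_pos _).le
      · positivity
    · exact hrpow
    · positivity
    · positivity
  -- integral lower bound
  set m : ℝ := 2 * π * (((2*s)⁻¹ * r)^2) * Real.exp (-π) * (2*s) ^ (-(1+δ)) with hm_def
  have hsub : Set.Ioc s (2*s) ⊆ Set.Ioi (1:ℝ) :=
    fun α hα => lt_of_le_of_lt hs1 hα.1
  have hint_sub : IntegrableOn F (Set.Ioc s (2*s)) := hFint.mono_set hsub
  have hconst_int : IntegrableOn (fun _ : ℝ => m) (Set.Ioc s (2*s)) := by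
    apply (integrableOn_const_iff).mpr
    right
    rw [Real.volume_Ioc]
    exact ENNReal.ofReal_lt_top
  have step1 : m * s ≤ ∫ α in Set.Ioc s (2*s), F α := by
    have h := setIntegral_mono_on hconst_int hint_sub measurableSet_Ioc key
    rw [setIntegral_const, Real.volume_real_Ioc,
      max_eq_left (by linarith), smul_eq_mul] at h
    calc m * s = (2*s - s) * m := by ring
      _ ≤ (∫ α in Set.Ioc s (2*s), F α) := h
  have step2 : (∫ α in Set.Ioc s (2*s), F α) ≤ ∫ α in Set.Ioi (1:ℝ), F α := by
    apply setIntegral_mono_set hFint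
    · filter_upwards [ae_restrict_mem measurableSet_Ioi] with α hα using hFnonneg α hα
    · exact HasSubset.Subset.eventuallyLE hsub
  -- identify m * s with c * (r^2 * s^(-(2+δ)))
  have h2s0 : (0:ℝ) < 2*s := by linarith
  have hms : m * s = c * (r^2 * s ^ (-(2+δ))) := by
    have e0 : ((2*s)⁻¹ * r)^2 = r^2 * ((2*s) ^ ((-2 : ℝ))) := by
      rw [Real.rpow_neg h2s0.le]
      rw [show ((2:ℝ)) = ((2:ℕ):ℝ) from by norm_num, Real.rpow_natCast]
      rw [mul_pow, inv_pow]
      ring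
    have e1 : (2*s) ^ ((-2:ℝ)) * (2*s) ^ (-(1+δ)) = (2*s) ^ (-(3+δ)) := by
      rw [← Real.rpow_add h2s0]; congr 1; ring
    have e2 : ((2:ℝ)*s) ^ (-(3+δ)) = (2:ℝ) ^ (-(3+δ)) * s ^ (-(3+δ)) :=
      Real.mul_rpow (by norm_num) hs0.le
    have e3 : s * s ^ (-(3+δ)) = s ^ (-(2+δ)) := by
      nth_rw 1 [← Real.rpow_one s]
      rw [← Real.rpow_add hs0]; congr 1; ring
    rw [hm_def, hc_def, e0]
    calc 2 * π * (r^2 * (2*s) ^ ((-2:ℝ))) * Real.exp (-π) * (2*s) ^ (-(1+δ)) * s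
        = 2 * π * Real.exp (-π) * r^2 * ((2*s) ^ ((-2:ℝ)) * (2*s) ^ (-(1+δ))) * s := by ring
      _ = 2 * π * Real.exp (-π) * r^2 * ((2:ℝ) ^ (-(3+δ)) * s ^ (-(3+δ))) * s := by
          rw [e1, e2]
      _ = 2 * π * Real.exp (-π) * (2:ℝ) ^ (-(3+δ)) * (r^2 * (s * s ^ (-(3+δ)))) := by ring
      _ = 2 * π * Real.exp (-π) * (2:ℝ) ^ (-(3+δ)) * (r^2 * s ^ (-(2+δ))) := by rw [e3]
  have hlb : c * (r^2 * s ^ (-(2+δ))) ≤ ∫ α in Set.Ioi (1:ℝ), F α := by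
    rw [← hms]; exact le_trans step1 step2
  -- upper bound on |ϑ x|
  have habs : ‖ϑ x‖ ≤ ‖d x‖ * r := by
    rw [hϑ, norm_neg]
    exact (d x).le_opNorm x
  have hub : ‖ϑ x‖ ≤ K * (r^2 * s ^ (-(2+δ))) := by
    rcases le_or_gt r 1 with hr1 | hr1
    · have hseq : s = 1 := max_eq_left hr1
      rw [hseq, Real.one_rpow, mul_one]
      have h1 : ‖d x‖ ≤ M * r := hlip x hr1
      have h2 : ‖d x‖ * r ≤ M * r * r := mul_le_mul_of_nonneg_right h1 hr0
      have h3 : M * r * r ≤ K * r^2 := by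
        have : M ≤ K := le_max_left _ _
        nlinarith
      calc ‖ϑ x‖ ≤ ‖d x‖ * r := habs
        _ ≤ M * r * r := h2
        _ ≤ K * r^2 := h3
    · have hseq : s = r := max_eq_right hr1.le
      have hrpos : (0:ℝ) < r := lt_trans one_pos hr1
      rw [hseq]
      have h1 : ‖d x‖ ≤ C * r ^ (-(1+δ)) := by
        refine le_trans (hdecay x) ?_
        apply mul_le_mul_of_nonneg_left _ hC.le
        exact Real.rpow_le_rpow_of_nonpos hrpos (by linarith) (by linarith)
      have e1 : r ^ 2 * r ^ (-(2+δ)) = r ^ (-δ) := by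
        rw [show (r:ℝ)^2 = r ^ ((2:ℕ):ℝ) from (Real.rpow_natCast r 2).symm,
          ← Real.rpow_add hrpos]
        congr 1; push_cast; ring
      have e2 : r ^ (-(1+δ)) * r = r ^ (-δ) := by
        nth_rw 2 [← Real.rpow_one r]
        rw [← Real.rpow_add hrpos]; congr 1; ring
      calc ‖ϑ x‖ ≤ ‖d x‖ * r := habs
        _ ≤ C * r ^ (-(1+δ)) * r := mul_le_mul_of_nonneg_right h1 hr0
        _ = C * r ^ (-δ) := by rw [mul_assoc, e2]
        _ ≤ K * r ^ (-δ) := mul_le_mul_of_nonneg_right (le_max_right _ _)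
            (Real.rpow_nonneg hrpos.le _)
        _ = K * (r^2 * r ^ (-(2+δ))) := by rw [e1]
  -- conclude
  calc ‖ϑ x‖ ≤ K * (r^2 * s ^ (-(2+δ))) := hub
    _ = (K / c) * (c * (r^2 * s ^ (-(2+δ)))) := by field_simp
    _ ≤ (K / c) * (∫ α in Set.Ioi (1:ℝ), F α) :=
        mul_le_mul_of_nonneg_left hlb (div_pos hK0 hc0).le
    _ = (K / c) * ∫ α in Set.Ioi (1:ℝ), ψ (α⁻¹ • x) / α ^ (1 + δ) := rfl
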